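/- Let {D_n}_{n∈ℕ} be a coalgebra filtration on a coalgebra D by subcoalgebras, and f : D → A a linear map into a unital associative algebra A. If the restriction of f to D_0 is convolution-invertible, then f is convolution-invertible (a filtered version of Takeuchi's Lemma). -/

import Mathlib

open TensorProduct

/-- The convolution product on `Hom_k(C, A)`. -/
noncomputable def conv {k : Type*} [Field k] {C A : Type*}
    [AddCommGroup C] [Module k C] [Coalgebra k C]
    [Ring A] [Algebra k A]
    (f g : C →ₗ[k] A) : C →ₗ[k] A :=
  LinearMap.mul' k A ∘ₗ TensorProduct.map f g ∘ₗ Coalgebra.comul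

/-- The convolution unit `c ↦ ε(c)·1_A`. -/
noncomputable def convUnit (k : Type*) [Field k] (C A : Type*)
    [AddCommGroup C] [Module k C] [Coalgebra k C]
    [Ring A] [Algebra k A] : C →ₗ[k] A :=
  Algebra.linearMap k A ∘ₗ (Coalgebra.counit : C →ₗ[k] k)

section Aux
variable {k : Type*} [Field k] {C A : Type*}
    [AddCommGroup C] [Module k C] [Coalgebra k C]
    [Ring A] [Algebra k A]

lemma conv_repr {ι : Type*} (f g : C →ₗ[k] A) {c : C} (r : Coalgebra.Repr k c ι) :
    conv f g c = ∑ i ∈ r.index, f (r.left i) * g (r.right i) := by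
  have : conv f g c = LinearMap.mul' k A (TensorProduct.map f g (Coalgebra.comul (R := k) c)) :=
    rfl
  rw [this, ← r.eq, map_sum, map_sum]
  simp [TensorProduct.map_tmul]

lemma conv_assoc (f g h : C →ₗ[k] A) : conv (conv f g) h = conv f (conv g h) := by
  ext c
  set r := Coalgebra.Repr.arbitrary k c with hr
  set a₁ : ∀ i : C × C, Coalgebra.Repr k (r.left i) (C × C) :=
    fun i => Coalgebra.Repr.arbitrary k (r.left i) with ha₁
  set a₂ : ∀ i : C × C, Coalgebra.Repr k (r.right i) (C × C) :=
    fun i => Coalgebra.Repr.arbitrary k (r.right i) with ha₂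
  have key := congrArg
    (⇑(LinearMap.mul' k A ∘ₗ TensorProduct.map f (LinearMap.mul' k A ∘ₗ TensorProduct.map g h)))
    (Coalgebra.sum_tmul_tmul_eq r a₁ a₂)
  simp only [map_sum, LinearMap.comp_apply, TensorProduct.map_tmul, LinearMap.mul'_apply] at key
  have L1 : conv (conv f g) h c =
      ∑ i ∈ r.index, ∑ j ∈ (a₁ i).index,
        (f ((a₁ i).left j) * g ((a₁ i).right j)) * h (r.right i) := by
    rw [conv_repr (conv f g) h r]
    exact Finset.sum_congr rfl fun i _ => by rw [conv_repr f g (a₁ i), Finset.sum_mul]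
  have R1 : conv f (conv g h) c =
      ∑ i ∈ r.index, ∑ j ∈ (a₂ i).index,
        f (r.left i) * (g ((a₂ i).left j) * h ((a₂ i).right j)) := by
    rw [conv_repr f (conv g h) r]
    exact Finset.sum_congr rfl fun i _ => by rw [conv_repr g h (a₂ i), Finset.mul_sum]
  rw [L1, R1]
  simpa only [mul_assoc] using key

lemma conv_unit_left (g : C →ₗ[k] A) : conv (convUnit k C A) g = g := by
  ext c
  have key := congrArg
    (⇑(LinearMap.mul' k A ∘ₗ TensorProduct.map (Algebra.linearMap k A) g))
    (Coalgebra.sum_counit_tmul_eq (R := k) (Coalgebra.Repr.arbitrary k c))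
  simp only [map_sum, LinearMap.comp_apply, TensorProduct.map_tmul, LinearMap.mul'_apply,
    Algebra.linearMap_apply, map_one, one_mul] at key
  rw [conv_repr _ _ (Coalgebra.Repr.arbitrary k c)]
  simpa only [convUnit, LinearMap.comp_apply, Algebra.linearMap_apply] using key

lemma conv_unit_right (g : C →ₗ[k] A) : conv g (convUnit k C A) = g := by
  ext c
  have key := congrArg
    (⇑(LinearMap.mul' k A ∘ₗ TensorProduct.map g (Algebra.linearMap k A)))
    (Coalgebra.sum_tmul_counit_eq (R := k) (Coalgebra.Repr.arbitrary k c))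
  simp only [map_sum, LinearMap.comp_apply, TensorProduct.map_tmul, LinearMap.mul'_apply,
    Algebra.linearMap_apply, map_one, mul_one] at key
  rw [conv_repr _ _ (Coalgebra.Repr.arbitrary k c)]
  simpa only [convUnit, LinearMap.comp_apply, Algebra.linearMap_apply] using key

lemma conv_add_left (p q r : C →ₗ[k] A) : conv (p + q) r = conv p r + conv q r := by
  simp only [conv, TensorProduct.map_add_left, LinearMap.add_comp, LinearMap.comp_add]

lemma conv_sum_smul_right {ι : Type*} (f : C →ₗ[k] A) (s : Finset ι) (a : ι → k)
    (g : ι → C →ₗ[k] A) (c : C) :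
    conv f (∑ i ∈ s, a i • g i) c = ∑ i ∈ s, a i • conv f (g i) c := by
  have hre : ∀ i, conv f (g i) c =
      ∑ p ∈ (Coalgebra.Repr.arbitrary k c).index,
        f ((Coalgebra.Repr.arbitrary k c).left p) * g i ((Coalgebra.Repr.arbitrary k c).right p) :=
    fun i => conv_repr f (g i) _
  rw [conv_repr _ _ (Coalgebra.Repr.arbitrary k c)]
  simp only [hre, LinearMap.sum_apply, LinearMap.smul_apply, Finset.mul_sum, mul_smul_comm,
    Finset.smul_sum]
  exact Finset.sum_comm

lemma conv_sum_smul_left {ι : Type*} (f : C →ₗ[k] A) (s : Finset ι) (a : ι → k)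
    (g : ι → C →ₗ[k] A) (c : C) :
    conv (∑ i ∈ s, a i • g i) f c = ∑ i ∈ s, a i • conv (g i) f c := by
  have hre : ∀ i, conv (g i) f c =
      ∑ p ∈ (Coalgebra.Repr.arbitrary k c).index,
        g i ((Coalgebra.Repr.arbitrary k c).left p) * f ((Coalgebra.Repr.arbitrary k c).right p) :=
    fun i => conv_repr (g i) f _
  rw [conv_repr _ _ (Coalgebra.Repr.arbitrary k c)]
  simp only [hre, LinearMap.sum_apply, LinearMap.smul_apply, Finset.sum_mul, smul_mul_assoc,
    Finset.smul_sum]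
  exact Finset.sum_comm

lemma conv_congr {G : Submodule k C} {c : C}
    (hx : Coalgebra.comul (R := k) c ∈
      LinearMap.range (TensorProduct.map G.subtype G.subtype))
    {p q p' q' : C →ₗ[k] A}
    (hp : ∀ x ∈ G, p x = p' x) (hq : ∀ x ∈ G, q x = q' x) :
    conv p q c = conv p' q' c := by
  obtain ⟨y, hy⟩ := hx
  have hpc : p ∘ₗ G.subtype = p' ∘ₗ G.subtype := by
    ext x; exact hp x x.2
  have hqc : q ∘ₗ G.subtype = q' ∘ₗ G.subtype := by
    ext x; exact hq x x.2
  have e1 : ∀ p q : C →ₗ[k] A,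
      conv p q c = LinearMap.mul' k A
        (TensorProduct.map (p ∘ₗ G.subtype) (q ∘ₗ G.subtype) y) := by
    intro p q
    show LinearMap.mul' k A (TensorProduct.map p q (Coalgebra.comul c)) = _
    rw [TensorProduct.map_comp, LinearMap.comp_apply, hy]
  rw [e1 p q, e1 p' q', hpc, hqc]

omit [Coalgebra k C] [Ring A] [Algebra k A] in
lemma sum_submodule_le {ι : Type*} {s : Finset ι} {P : ι → Submodule k C} {Q : Submodule k C}
    (h : ∀ i ∈ s, P i ≤ Q) : ∑ i ∈ s, P i ≤ Q := by
  classical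
  induction s using Finset.cons_induction with
  | empty => simp
  | cons a s ha ih =>
    rw [Finset.sum_cons, Submodule.add_eq_sup]
    exact sup_le (h a (Finset.mem_cons_self a s)) (ih fun i hi => h i (Finset.mem_cons_of_mem hi))

end Aux


lemma takeuchi_aux {k : Type*} [Field k] {D A : Type*}
    [AddCommGroup D] [Module k D] [Coalgebra k D]
    [Ring A] [Algebra k A]
    (F : ℕ → Submodule k D)
    (hmono : Monotone F)
    (hexh : ⨆ n, F n = ⊤)
    (hfilt : ∀ n : ℕ, ∀ c ∈ F n, Coalgebra.comul (R := k) c ∈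
      ∑ i ∈ Finset.range (n + 1),
        LinearMap.range (TensorProduct.map (F i).subtype (F (n - i)).subtype))
    (hsub : ∀ n : ℕ, ∀ c ∈ F n, Coalgebra.comul (R := k) c ∈
      LinearMap.range (TensorProduct.map (F n).subtype (F n).subtype))
    (u : D →ₗ[k] A)
    (hu : ∀ c ∈ F 0, u c = convUnit k D A c) :
    ∃ v : D →ₗ[k] A, conv u v = convUnit k D A ∧ conv v u = convUnit k D A := by
  classical
  set e : D →ₗ[k] A := convUnit k D A with he
  set t : D →ₗ[k] A := u - e with htdef
  have hue : u = t + e := by rw [htdef]; abel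
  have ht0 : ∀ c ∈ F 0, t c = 0 := by
    intro c hc
    simp [htdef, hu c hc, he]
  set tpow : ℕ → (D →ₗ[k] A) := fun m => (conv t)^[m] e with htpow
  have tpow_zero : tpow 0 = e := rfl
  have tpow_succ : ∀ m, tpow (m + 1) = conv t (tpow m) := by
    intro m; rw [htpow]; exact Function.iterate_succ_apply' _ _ _
  -- vanishing of large powers on the filtration
  have hvan : ∀ n, ∀ c ∈ F n, ∀ j, n < j → tpow j c = 0 := by
    intro n
    induction n using Nat.strong_induction_on with
    | _ n IH =>
      intro c hc j hj
      obtain ⟨j', rfl⟩ : ∃ j'', j = j'' + 1 := ⟨j - 1, by omega⟩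
      rw [tpow_succ]
      set L : D ⊗[k] D →ₗ[k] A := LinearMap.mul' k A ∘ₗ TensorProduct.map t (tpow j') with hL
      have hLc : conv t (tpow j') c = L (Coalgebra.comul (R := k) c) := rfl
      rw [hLc]
      have hker : (∑ i ∈ Finset.range (n + 1),
          LinearMap.range (TensorProduct.map (F i).subtype (F (n - i)).subtype)) ≤
          LinearMap.ker L := by
        apply sum_submodule_le
        intro i hi
        have hi' : i ≤ n := by simpa using Nat.lt_succ_iff.1 (Finset.mem_range.1 hi)
        rintro x ⟨y, rfl⟩
        have hcomp : L ∘ₗ TensorProduct.map (F i).subtype (F (n - i)).subtype =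
            LinearMap.mul' k A ∘ₗ
              TensorProduct.map (t ∘ₗ (F i).subtype) (tpow j' ∘ₗ (F (n - i)).subtype) := by
          rw [hL, LinearMap.comp_assoc, ← TensorProduct.map_comp]
        have : L (TensorProduct.map (F i).subtype (F (n - i)).subtype y) =
            (LinearMap.mul' k A ∘ₗ
              TensorProduct.map (t ∘ₗ (F i).subtype) (tpow j' ∘ₗ (F (n - i)).subtype)) y := by
          rw [← hcomp]; rfl
        rw [LinearMap.mem_ker, this]
        rcases Nat.eq_zero_or_pos i with hi0 | hi1
        · subst hi0
          have hz : t ∘ₗ (F 0).subtype = 0 := by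
            ext x; exact ht0 x x.2
          simp [hz]
        · have hz : tpow j' ∘ₗ (F (n - i)).subtype = 0 := by
            ext x; exact IH (n - i) (by omega) x x.2 j' (by omega)
          simp [hz]
      exact hker (hfilt n c hc)
  -- partial sums of the geometric series
  set Pn : ℕ → (D →ₗ[k] A) := fun n => ∑ j ∈ Finset.range (n + 1), ((-1 : k) ^ j • tpow j)
    with hPn
  have hstab : ∀ n m, n ≤ m → ∀ c ∈ F n, Pn m c = Pn n c := by
    intro n m hnm c hc
    rw [hPn]
    simp only [LinearMap.sum_apply, LinearMap.smul_apply]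
    refine (Finset.sum_subset (Finset.range_subset_range.2 (by omega)) ?_).symm
    intro j hjm hjn
    rw [hvan n c hc j (by
      have := Finset.mem_range.1 hjm
      have : ¬ j < n + 1 := fun h => hjn (Finset.mem_range.2 h)
      omega), smul_zero]
  -- choice of a filtration level for each element
  have hex : ∀ c : D, ∃ n, c ∈ F n := by
    intro c
    have : c ∈ (⨆ n, F n) := by rw [hexh]; exact Submodule.mem_top
    exact (Submodule.mem_iSup_of_directed F hmono.directed_le).1 this
  choose N hN using hex
  -- the candidate inverse
  set vfun : D → A := fun c => Pn (N c) c with hvfundef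
  have hvfun : ∀ n, ∀ c ∈ F n, vfun c = Pn n c := by
    intro n c hc
    have h1 : Pn (N c + n) c = Pn (N c) c := hstab (N c) _ (by omega) c (hN c)
    have h2 : Pn (N c + n) c = Pn n c := hstab n _ (by omega) c hc
    show Pn (N c) c = Pn n c
    exact h1.symm.trans h2
  set v : D →ₗ[k] A :=
    { toFun := vfun
      map_add' := by
        intro x y
        set n : ℕ := N x + N y + N (x + y) with hn
        have hx : x ∈ F n := hmono (by omega) (hN x)
        have hy : y ∈ F n := hmono (by omega) (hN y)
        have hxy : x + y ∈ F n := hmono (by omega) (hN (x + y))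
        rw [hvfun n _ hxy, hvfun n _ hx, hvfun n _ hy, map_add]
      map_smul' := by
        intro a x
        set n : ℕ := N x + N (a • x) with hn
        have hx : x ∈ F n := hmono (by omega) (hN x)
        have hax : a • x ∈ F n := hmono (by omega) (hN (a • x))
        show vfun (a • x) = a • vfun x
        rw [hvfun n _ hax, hvfun n _ hx, map_smul] } with hv
  have hvapp : ∀ n, ∀ c ∈ F n, v c = Pn n c := fun n c hc => hvfun n c hc
  -- powers commute with t
  have htcomm : ∀ j, conv (tpow j) t = tpow (j + 1) := by
    intro j
    induction j with
    | zero => rw [tpow_succ, tpow_zero, conv_unit_left, conv_unit_right]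
    | succ j IH =>
      rw [tpow_succ j, conv_assoc, IH, ← tpow_succ]
  -- the two convolution identities
  have hconv_right : ∀ j, ∀ c : D, conv u (tpow j) c = tpow j c + tpow (j + 1) c := by
    intro j c
    rw [hue, conv_add_left, LinearMap.add_apply, conv_unit_left, ← tpow_succ, add_comm]
  have hconv_left : ∀ j, ∀ c : D, conv (tpow j) u c = tpow j c + tpow (j + 1) c := by
    intro j c
    have : conv (tpow j) u = conv (tpow j) t + conv (tpow j) e := by
      rw [hue]
      ext x
      rw [conv_repr _ _ (Coalgebra.Repr.arbitrary k x), LinearMap.add_apply,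
        conv_repr _ _ (Coalgebra.Repr.arbitrary k x), conv_repr _ _ (Coalgebra.Repr.arbitrary k x),
        ← Finset.sum_add_distrib]
      exact Finset.sum_congr rfl fun i _ => by
        simp [mul_add]
    rw [this, LinearMap.add_apply, conv_unit_right, htcomm, add_comm]
  -- telescoping
  have htel : ∀ (w : D →ₗ[k] A), (∀ j, ∀ c : D, conv w (tpow j) c = tpow j c + tpow (j + 1) c) →
      True := fun _ _ => trivial
  have main : ∀ (lr : Bool) (c : D), conv u v c = e c ∧ conv v u c = e c := by
    intro _ c
    have hc : c ∈ F (N c) := hN c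
    set n : ℕ := N c with hn
    have hG : ∀ j, (-1 : k) ^ j • (tpow j c + tpow (j + 1) c) =
        ((-1 : k) ^ j • tpow j c) - ((-1 : k) ^ (j + 1) • tpow (j + 1) c) := by
      intro j
      rw [pow_succ, mul_comm, mul_smul, neg_one_smul, smul_add, sub_neg_eq_add]
    have htail : tpow (n + 1) c = 0 := hvan n c hc (n + 1) (by omega)
    constructor
    · have s1 : conv u v c = conv u (Pn n) c :=
        conv_congr (hsub n c hc) (fun x _ => rfl) (fun x hx => hvapp n x hx)
      have s2 : conv u (Pn n) c =
          ∑ j ∈ Finset.range (n + 1), (-1 : k) ^ j • conv u (tpow j) c := by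
        rw [hPn]
        exact conv_sum_smul_right u _ _ tpow c
      rw [s1, s2]
      calc ∑ j ∈ Finset.range (n + 1), (-1 : k) ^ j • conv u (tpow j) c
          = ∑ j ∈ Finset.range (n + 1),
            (((-1 : k) ^ j • tpow j c) - ((-1 : k) ^ (j + 1) • tpow (j + 1) c)) := by
            exact Finset.sum_congr rfl fun j _ => by rw [hconv_right, hG]
        _ = (-1 : k) ^ 0 • tpow 0 c - (-1 : k) ^ (n + 1) • tpow (n + 1) c :=
            Finset.sum_range_sub' (fun j => (-1 : k) ^ j • tpow j c) (n + 1)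
        _ = e c := by rw [htail, tpow_zero, pow_zero, one_smul, smul_zero, sub_zero]
    · have s1 : conv v u c = conv (Pn n) u c :=
        conv_congr (hsub n c hc) (fun x hx => hvapp n x hx) (fun x _ => rfl)
      have s2 : conv (Pn n) u c =
          ∑ j ∈ Finset.range (n + 1), (-1 : k) ^ j • conv (tpow j) u c := by
        rw [hPn]
        exact conv_sum_smul_left u _ _ tpow c
      rw [s1, s2]
      calc ∑ j ∈ Finset.range (n + 1), (-1 : k) ^ j • conv (tpow j) u c
          = ∑ j ∈ Finset.range (n + 1),
            (((-1 : k) ^ j • tpow j c) - ((-1 : k) ^ (j + 1) • tpow (j + 1) c)) := by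
            exact Finset.sum_congr rfl fun j _ => by rw [hconv_left, hG]
        _ = (-1 : k) ^ 0 • tpow 0 c - (-1 : k) ^ (n + 1) • tpow (n + 1) c :=
            Finset.sum_range_sub' (fun j => (-1 : k) ^ j • tpow j c) (n + 1)
        _ = e c := by rw [htail, tpow_zero, pow_zero, one_smul, smul_zero, sub_zero]
  exact ⟨v, LinearMap.ext fun c => (main true c).1, LinearMap.ext fun c => (main true c).2⟩

/-- filtered Takeuchi Lemma: Let `{D_n}` be a coalgebra filtration of `D`
by subcoalgebras and `f : D → A`. If the restriction of `f` to `D_0` is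
convolution-invertible, then `f` is convolution-invertible. -/
theorem takeuchi_filtered {k : Type*} [Field k] {D A : Type*}
    [AddCommGroup D] [Module k D] [Coalgebra k D]
    [Ring A] [Algebra k A]
    (F : ℕ → Submodule k D)
    (hmono : Monotone F)
    (hexh : ⨆ n, F n = ⊤)
    (hfilt : ∀ n : ℕ, ∀ c ∈ F n, Coalgebra.comul (R := k) c ∈
      ∑ i ∈ Finset.range (n + 1),
        LinearMap.range (TensorProduct.map (F i).subtype (F (n - i)).subtype))
    (hsub : ∀ n : ℕ, ∀ c ∈ F n, Coalgebra.comul (R := k) c ∈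
      LinearMap.range (TensorProduct.map (F n).subtype (F n).subtype))
    (f : D →ₗ[k] A)
    (hf0 : ∃ g₀ : D →ₗ[k] A, ∀ c ∈ F 0,
      conv f g₀ c = convUnit k D A c ∧ conv g₀ f c = convUnit k D A c) :
    ∃ g : D →ₗ[k] A, conv f g = convUnit k D A ∧ conv g f = convUnit k D A := by
  obtain ⟨g₀, hg₀⟩ := hf0
  obtain ⟨v₁, hv₁r, hv₁l⟩ := takeuchi_aux F hmono hexh hfilt hsub (conv f g₀)
    (fun c hc => (hg₀ c hc).1)
  obtain ⟨v₂, hv₂r, hv₂l⟩ := takeuchi_aux F hmono hexh hfilt hsub (conv g₀ f)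
    (fun c hc => (hg₀ c hc).2)
  have hr : conv f (conv g₀ v₁) = convUnit k D A := by rw [← conv_assoc, hv₁r]
  have hl : conv (conv v₂ g₀) f = convUnit k D A := by rw [conv_assoc, hv₂l]
  have heq : conv v₂ g₀ = conv g₀ v₁ := by
    calc conv v₂ g₀ = conv (conv v₂ g₀) (convUnit k D A) := (conv_unit_right _).symm
      _ = conv (conv v₂ g₀) (conv f (conv g₀ v₁)) := by rw [hr]
      _ = conv (conv (conv v₂ g₀) f) (conv g₀ v₁) := (conv_assoc _ _ _).symm
      _ = conv g₀ v₁ := by rw [hl, conv_unit_left]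
  exact ⟨conv g₀ v₁, hr, by rw [← heq, hl]⟩
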